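/- If H is an r-segment hypergraph with r ≥ 2, then the strong chromatic number of H is at most r². -/
import Mathlib


/-- An `r`-segment hypergraph: vertices in `ℤ²`, each edge consists of `r` consecutive
integer points on a line, and every line in `ℝ²` contains at most one edge. -/
structure RSegmentHypergraph (r : ℕ) where
  edges : Set (Set (ℤ × ℤ))
  edge_consecutive : ∀ E ∈ edges, ∃ v w : ℤ × ℤ, Int.gcd w.1 w.2 = 1 ∧
    E = {p | ∃ k : ℕ, k < r ∧ p = (v.1 + (k : ℤ) * w.1, v.2 + (k : ℤ) * w.2)}
  line_unique : ∀ E ∈ edges, ∀ F ∈ edges,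
    (∀ p ∈ E ∪ F, ∀ q ∈ E ∪ F, ∀ s ∈ E ∪ F,
        (q.1 - p.1) * (s.2 - p.2) = (q.2 - p.2) * (s.1 - p.1)) → E = F

/-- If `H` is an `r`-segment hypergraph with `r ≥ 2`, then `χ_s(H) ≤ r²`. -/
theorem strong_chromatic_number_le_sq (r : ℕ) (hr : 2 ≤ r)
    (H : RSegmentHypergraph r) :
    ∃ c : ℤ × ℤ → Fin (r ^ 2),
      ∀ E ∈ H.edges, ∀ p ∈ E, ∀ q ∈ E, p ≠ q → c p ≠ c q := by
  have hr0 : 0 < r := by omega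
  have hr0' : (0 : ℤ) < (r : ℤ) := by exact_mod_cast hr0
  -- color by coordinates mod r
  have hlt : ∀ x : ℤ, (x % (r : ℤ)).toNat < r := by
    intro x
    have h1 : 0 ≤ x % (r : ℤ) := Int.emod_nonneg x (by omega)
    have h2 : x % (r : ℤ) < (r : ℤ) := Int.emod_lt_of_pos x hr0'
    omega
  refine ⟨fun p => ⟨(p.1 % (r : ℤ)).toNat * r + (p.2 % (r : ℤ)).toNat, ?_⟩, ?_⟩
  · have h1 := hlt (p.1)
    have h2 := hlt (p.2)
    calc (p.1 % (r : ℤ)).toNat * r + (p.2 % (r : ℤ)).toNat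
        < (p.1 % (r : ℤ)).toNat * r + r := by omega
      _ = ((p.1 % (r : ℤ)).toNat + 1) * r := by ring
      _ ≤ r * r := Nat.mul_le_mul_right r (by omega)
      _ = r ^ 2 := (sq r).symm
  · intro E hE p hp q hq hpq hc
    obtain ⟨v, w, hw, hEeq⟩ := H.edge_consecutive E hE
    rw [hEeq] at hp hq
    obtain ⟨k, hk, hpk⟩ := hp
    obtain ⟨l, hl, hql⟩ := hq
    -- colors equal implies coordinates congruent mod r
    have hfin : (p.1 % (r : ℤ)).toNat * r + (p.2 % (r : ℤ)).toNat
        = (q.1 % (r : ℤ)).toNat * r + (q.2 % (r : ℤ)).toNat := by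
      simpa using congrArg Fin.val hc
    have h1p := hlt p.1; have h2p := hlt p.2
    have h1q := hlt q.1; have h2q := hlt q.2
    have key : ∀ a b a' b' : ℕ, b < r → b' < r → a * r + b = a' * r + b' →
        a = a' ∧ b = b' := by
      intro a b a' b' hb hb' h
      have h1 : (b + a * r) / r = a := by
        rw [Nat.add_mul_div_right _ _ hr0, Nat.div_eq_of_lt hb, Nat.zero_add]
      have h2 : (b' + a' * r) / r = a' := by
        rw [Nat.add_mul_div_right _ _ hr0, Nat.div_eq_of_lt hb', Nat.zero_add]
      have h3 : b + a * r = b' + a' * r := by omega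
      have ha : a = a' := by rw [← h1, ← h2, h3]
      subst ha
      exact ⟨rfl, by omega⟩
    obtain ⟨heq1, heq2⟩ := key _ _ _ _ h2p h2q hfin
    have hm1 : p.1 % (r : ℤ) = q.1 % (r : ℤ) := by
      have h1 : 0 ≤ p.1 % (r : ℤ) := Int.emod_nonneg _ (by omega)
      have h2 : 0 ≤ q.1 % (r : ℤ) := Int.emod_nonneg _ (by omega)
      omega
    have hm2 : p.2 % (r : ℤ) = q.2 % (r : ℤ) := by
      have h1 : 0 ≤ p.2 % (r : ℤ) := Int.emod_nonneg _ (by omega)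
      have h2 : 0 ≤ q.2 % (r : ℤ) := Int.emod_nonneg _ (by omega)
      omega
    have hd1 : (r : ℤ) ∣ (p.1 - q.1) := dvd_sub_comm.mp (Int.ModEq.dvd hm1)
    have hd2 : (r : ℤ) ∣ (p.2 - q.2) := dvd_sub_comm.mp (Int.ModEq.dvd hm2)
    have hp1 : p.1 = v.1 + (k : ℤ) * w.1 := by rw [hpk]
    have hp2 : p.2 = v.2 + (k : ℤ) * w.2 := by rw [hpk]
    have hq1 : q.1 = v.1 + (l : ℤ) * w.1 := by rw [hql]
    have hq2 : q.2 = v.2 + (l : ℤ) * w.2 := by rw [hql]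
    have hd1' : (r : ℤ) ∣ ((k : ℤ) - l) * w.1 := by
      have : p.1 - q.1 = ((k : ℤ) - l) * w.1 := by rw [hp1, hq1]; ring
      rwa [this] at hd1
    have hd2' : (r : ℤ) ∣ ((k : ℤ) - l) * w.2 := by
      have : p.2 - q.2 = ((k : ℤ) - l) * w.2 := by rw [hp2, hq2]; ring
      rwa [this] at hd2
    have hcop : IsCoprime w.1 w.2 := Int.isCoprime_iff_gcd_eq_one.mpr hw
    obtain ⟨a, b, hab⟩ := hcop
    have hdvd : (r : ℤ) ∣ ((k : ℤ) - l) := by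
      have : ((k : ℤ) - l) = a * (((k : ℤ) - l) * w.1) + b * (((k : ℤ) - l) * w.2) := by
        have := hab; nlinarith [hab]
      rw [this]
      exact Dvd.dvd.add (Dvd.dvd.mul_left hd1' a) (Dvd.dvd.mul_left hd2' b)
    have hkl : k ≠ l := by
      intro h; apply hpq; rw [hpk, hql, h]
    have habs : ((k : ℤ) - l) ≠ 0 := by
      intro h; apply hkl; omega
    have hz : ((k : ℤ) - l) = 0 := by
      refine Int.eq_zero_of_dvd_of_natAbs_lt_natAbs hdvd ?_
      omega
    exact habs hz
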